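/- arXiv:2008.08943 — 2 statements merged into one kernel-verified Lean document; each statement's English description precedes it below -/
import Mathlib

section
/- Let X be a simplicial set, G a simplicial group, and τ : X_{>0} → G a twisting function. Let n = k + l with k, l ≥ 0, and write i ∈ S_n as i = (i_1, i_2) where i_1 consists of the first l entries and i_2 of the last k entries, so that i_1 ∈ S_n(p) for p = (0 = p_0 < p_1 < ⋯ < p_{k+1} = n+1) the set left by the removal procedure of i_1 on {0,…,n+1}, and i_2 ∈ S_k. Then for every x ∈ X_n, (∂_0)^l hatSz_i x = hatSz_{i_2} x(p_1 − 1, p_2 − 1, …, p_{k+1} − 1) in (X ×_τ G)_k. -/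
open CategoryTheory

/-- `memS n l i` means `i ∈ S_{n,l}`: a sequence of length `l` with
`0 ≤ i_s ≤ n - s` for `1 ≤ s ≤ l` (here `i.getD t 0` is the entry `i_{t+1}`). -/
def memS (n l : ℕ) (i : List ℕ) : Prop :=
  i.length = l ∧ ∀ t < l, i.getD t 0 + t + 1 ≤ n

/-- The ordered set remaining from `{0, …, n}` after performing the first `r`
removal steps prescribed by `i`: at each step the element at (0-indexed)
position `i_r + 1` of the remaining set is removed. -/
def restAfter (n : ℕ) (i : List ℕ) (r : ℕ) : List ℕ :=
  (i.take r).foldl (fun L a => L.eraseIdx (a + 1)) (List.range (n + 1))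

/-- The ordered set remaining from `{0, …, n}` after the whole removal
procedure prescribed by `i`. -/
def restList (n : ℕ) (i : List ℕ) : List ℕ := restAfter n i i.length

/-- The element `e_{r+1}` removed at (0-indexed) step `r` of the removal
procedure on `{0, …, n}` prescribed by `i`. -/
def elemRemoved (n : ℕ) (i : List ℕ) (r : ℕ) : ℕ :=
  (restAfter n i r).getD (i.getD r 0 + 1) 0

/-- The component `α_s` of `Ψ_p(i)`, for the interval `(a, b) = (p_{s-1}, p_s)`:
the set of (0-indexed) steps at which an element strictly between `a` and `b`
is removed. -/
def psiAlpha (n : ℕ) (i : List ℕ) (a b : ℕ) : Finset ℕ :=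
  (Finset.range i.length).filter
    (fun r => a < elemRemoved n i r ∧ elemRemoved n i r < b)

/-- The component `j_s` of `Ψ_p(i)`, for the interval `(a, b) = (p_{s-1}, p_s)`:
its `u`-th entry is `w - 1` where the `u`-th element of `(a, b)` to be removed
is, at the moment of its removal, the `w`-th smallest element of `(a, b)` still
present. -/
def psiJ (n : ℕ) (i : List ℕ) (a b : ℕ) : List ℕ :=
  ((List.range i.length).filter
      (fun r => decide (a < elemRemoved n i r ∧ elemRemoved n i r < b))).map
    (fun r => ((restAfter n i r).filter
      (fun y => decide (a < y ∧ y < elemRemoved n i r))).length)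

/-- `α` is a `(q_0, …, q_{k-1})`-shuffle: an ordered partition of
`{0, …, q_0 + ⋯ + q_{k-1} - 1}` with `|α_s| = q_s`. -/
def IsShuffleF {k : ℕ} (q : Fin k → ℕ) (α : Fin k → Finset ℕ) : Prop :=
  (∀ s, (α s).card = q s) ∧ (∀ s t, s ≠ t → Disjoint (α s) (α t)) ∧
    Finset.univ.biUnion α = Finset.range (∑ s, q s)

/-- The sign exponent `(α)` of a shuffle: the number of pairs `(a, b)` with
`a ∈ α_s`, `b ∈ α_t`, `s < t` and `a > b`. -/
def shuffleExpN (k : ℕ) (α : ℕ → Finset ℕ) : ℕ :=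
  ∑ s ∈ Finset.range k, ∑ t ∈ Finset.range k,
    if s < t then ∑ a ∈ α s, ((α t).filter (fun b => b < a)).card else 0

/-- Vertex map of the derived operator. -/
def derivedFun (f : ℕ → ℕ) : ℕ → ℕ := fun t => if t = 0 then 0 else f (t - 1) + 1

/-- Vertex map of the face map `δ_j`. -/
def deltaFun (j : ℕ) : ℕ → ℕ := fun t => if t < j then t else t + 1

/-- Vertex map of the degeneracy map `σ_j`. -/
def sigmaFun (j : ℕ) : ℕ → ℕ := fun t => if t ≤ j then t else t - 1

/-- Vertex map of the Szczarba operator `D_i^k`. -/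
def DFun : List ℕ → ℕ → ℕ → ℕ
  | [], _ => id
  | (i1 :: i'), k =>
    if k < i1 then deltaFun (i1 - k) ∘ sigmaFun 0 ∘ derivedFun (DFun i' k)
    else if k = i1 then derivedFun (DFun i' k)
    else sigmaFun 0 ∘ derivedFun (DFun i' (k - 1))

/-- The morphism `[b] ⟶ [a]` in the simplex category whose vertex map is (the
monotone clamped version of) `f`.  When `f` is monotone and maps `[b]` into `[a]`
this is exactly the morphism with vertex map `f`. -/
def mkHomF (a b : ℕ) (f : ℕ → ℕ) : (SimplexCategory.mk b ⟶ SimplexCategory.mk a) :=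
  SimplexCategory.mkHom
    { toFun := fun t => ⟨min ((Finset.range (t.1 + 1)).sup f) a,
        Nat.lt_succ_of_le (min_le_right _ _)⟩
      monotone' := fun u v huv => by
        simp only [Fin.mk_le_mk]
        exact min_le_min
          (Finset.sup_mono (Finset.range_subset_range.mpr (Nat.succ_le_succ huv))) le_rfl }

open Simplicial in
/-- The natural simplicial operator `X_a → X_b` with vertex map `f : [b] → [a]`. -/
def simpOp (X : SSet) (f : ℕ → ℕ) (a b : ℕ) (x : X _⦋a⦌) : X _⦋b⦌ :=
  X.map (mkHomF a b f).op x

open Simplicial in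
/-- The natural simplicial operator `G_a → G_b` with vertex map `f : [b] → [a]`,
for a simplicial group `G`. -/
def grpOp (G : CategoryTheory.SimplicialObject GrpCat) (f : ℕ → ℕ) (a b : ℕ)
    (g : G _⦋a⦌) : G _⦋b⦌ :=
  (G.map (mkHomF a b f).op) g

open Simplicial in
/-- A twisting function `τ : X_{>0} → G`. -/
structure TwistingFn (X : SSet) (G : CategoryTheory.SimplicialObject GrpCat) where
  map : ∀ n : ℕ, X _⦋n + 1⦌ → G _⦋n⦌
  d0 : ∀ (n : ℕ) (x : X _⦋n + 2⦌),
    grpOp G (deltaFun 0) (n + 1) n (map (n + 1) x)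
      = (map n (simpOp X (deltaFun 0) (n + 2) (n + 1) x))⁻¹
        * map n (simpOp X (deltaFun 1) (n + 2) (n + 1) x)
  dk : ∀ (n k : ℕ) (x : X _⦋n + 2⦌), 0 < k → k < n + 2 →
    grpOp G (deltaFun k) (n + 1) n (map (n + 1) x)
      = map n (simpOp X (deltaFun (k + 1)) (n + 2) (n + 1) x)
  sk : ∀ (n k : ℕ) (x : X _⦋n + 1⦌), k < n + 1 →
    grpOp G (sigmaFun k) n (n + 1) (map n x)
      = map (n + 1) (simpOp X (sigmaFun (k + 1)) (n + 1) (n + 2) x)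
  s0 : ∀ (n : ℕ) (x : X _⦋n⦌), map n (simpOp X (sigmaFun 0) n (n + 1) x) = 1

open Simplicial in
/-- Szczarba's operator `Sz_i : X_{n+1} → G_n`. -/
def Sz {X : SSet} {G : CategoryTheory.SimplicialObject GrpCat} (τ : TwistingFn X G)
    (n : ℕ) (i : List ℕ) (x : X _⦋n + 1⦌) : G _⦋n⦌ :=
  ((List.range (n + 1)).map (fun r =>
    grpOp G (DFun i r) (n - r) n
      ((τ.map (n - r) (simpOp X (fun t => t + r) (n + 1) ((n - r) + 1) x))⁻¹))).prod

open Simplicial in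
/-- The group component of the operator `hatSz_i : X_n → X_n × G_n`. -/
def hatSzG {X : SSet} {G : CategoryTheory.SimplicialObject GrpCat} (τ : TwistingFn X G)
    (n : ℕ) (i : List ℕ) (x : X _⦋n⦌) : G _⦋n⦌ :=
  ((List.range n).map (fun r =>
    grpOp G (DFun i (r + 1)) (n - (r + 1)) n
      ((τ.map (n - (r + 1)) (simpOp X (fun t => t + r) n ((n - (r + 1)) + 1) x))⁻¹))).prod

open Simplicial in
/-- Szczarba's operator `hatSz_i : X_n → (X ×_τ G)_n = X_n × G_n`. -/
def hatSz {X : SSet} {G : CategoryTheory.SimplicialObject GrpCat} (τ : TwistingFn X G)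
    (n : ℕ) (i : List ℕ) (x : X _⦋n⦌) : X _⦋n⦌ × G _⦋n⦌ :=
  (simpOp X (DFun i 0) n n x, hatSzG τ n i x)

open Simplicial in
/-- The `r`-fold iterate of the zeroth face map of the twisted Cartesian
product `X ×_τ G`. -/
def twD0pow {X : SSet} {G : CategoryTheory.SimplicialObject GrpCat} (τ : TwistingFn X G) :
    (r : ℕ) → (m : ℕ) → X _⦋m + r⦌ × (G _⦋m + r⦌ : Type _) → X _⦋m⦌ × (G _⦋m⦌ : Type _) := fun r m z => match r, m, z with
  | 0, _, z => z
  | r + 1, m, z =>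
      twD0pow τ r m
        (simpOp X (deltaFun 0) (m + r + 1) (m + r) z.1,
         τ.map (m + r) z.1 * grpOp G (deltaFun 0) (m + r + 1) (m + r) z.2)

/-- Vertex map of the iterated degeneracy `s_B` on a finite set `B`. -/
def degenFun (B : Finset ℕ) : ℕ → ℕ := fun t => t - (B.filter (fun b => b < t)).card

/-- The map `Φ : S_n × [n] → S_{n-1} × [n-1]`. -/
def Phi : List ℕ → ℕ → List ℕ × ℕ
  | [], _ => ([], 0)
  | (i1 :: i'), p =>
    if p < i1 then ((i1 - 1) :: (Phi i' p).1, (Phi i' p).2 + 1)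
    else if p = i1 ∨ p = i1 + 1 then (i', 0)
    else (i1 :: (Phi i' (p - 1)).1, (Phi i' (p - 1)).2 + 1)

open Simplicial

/-- `f` is a valid vertex map `[b] → [a]`: monotone on `[0,b]` and `f b ≤ a`. -/
def Nice (a b : ℕ) (f : ℕ → ℕ) : Prop :=
  (∀ u v, u ≤ v → v ≤ b → f u ≤ f v) ∧ f b ≤ a

lemma Nice.mono {a b f} (h : Nice a b f) {u v : ℕ} (huv : u ≤ v) (hv : v ≤ b) :
    f u ≤ f v := h.1 u v huv hv

lemma Nice.le {a b f} (h : Nice a b f) {t : ℕ} (ht : t ≤ b) : f t ≤ a :=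
  le_trans (h.1 t b ht le_rfl) h.2

lemma mkHomF_apply {a b : ℕ} {f : ℕ → ℕ} (h : Nice a b f) (t : Fin (b + 1)) :
    ((mkHomF a b f).toOrderHom t : ℕ) = f t := by
  have ht : (t : ℕ) ≤ b := Nat.lt_succ_iff.mp t.isLt
  have hsup : (Finset.range ((t : ℕ) + 1)).sup f = f t := by
    apply le_antisymm
    · exact Finset.sup_le fun u hu =>
        h.mono (Nat.lt_succ_iff.mp (Finset.mem_range.mp hu)) ht
    · exact Finset.le_sup (Finset.self_mem_range_succ (t : ℕ))
  show min ((Finset.range ((t : ℕ) + 1)).sup f) a = f t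
  rw [hsup, min_eq_left (h.le ht)]

lemma mkHomF_congr {a b : ℕ} {f g : ℕ → ℕ} (h : ∀ t ≤ b, f t = g t) :
    mkHomF a b f = mkHomF a b g := by
  ext t : 3
  apply Fin.ext
  show min ((Finset.range ((t : ℕ) + 1)).sup f) a = min ((Finset.range ((t : ℕ) + 1)).sup g) a
  have ht : (t : ℕ) ≤ b := Nat.lt_succ_iff.mp t.isLt
  congr 1
  apply Finset.sup_congr rfl
  intro u hu
  exact h u (le_trans (Nat.lt_succ_iff.mp (Finset.mem_range.mp hu)) ht)

lemma mkHomF_comp {a b c : ℕ} {f g : ℕ → ℕ} (hf : Nice a b f) (hg : Nice b c g) :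
    mkHomF b c g ≫ mkHomF a b f = mkHomF a c (fun t => f (g t)) := by
  have hfg : Nice a c (fun t => f (g t)) :=
    ⟨fun u v huv hv => hf.mono (hg.mono huv hv) (hg.le hv), hf.le hg.2⟩
  ext t : 3
  apply Fin.ext
  have h1 : ((mkHomF b c g ≫ mkHomF a b f).toOrderHom t : ℕ)
      = f (g t) := by
    rw [SimplexCategory.comp_toOrderHom]
    show ((mkHomF a b f).toOrderHom ((mkHomF b c g).toOrderHom t) : ℕ) = _
    have := mkHomF_apply hg t
    rw [show ((mkHomF b c g).toOrderHom t) = ⟨g t, Nat.lt_succ_of_le (hg.le (Nat.lt_succ_iff.mp t.isLt))⟩ from Fin.ext this]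
    exact mkHomF_apply hf _
  rw [h1, mkHomF_apply hfg t]

lemma simpOp_comp (X : SSet) {a b c : ℕ} {f g : ℕ → ℕ} (hf : Nice a b f) (hg : Nice b c g)
    (x : X _⦋a⦌) :
    simpOp X g b c (simpOp X f a b x) = simpOp X (fun t => f (g t)) a c x := by
  show (X.map _) ((X.map _) x) = _
  rw [← FunctorToTypes.map_comp_apply, ← op_comp, mkHomF_comp hf hg]
  rfl

lemma grpOp_comp (G : CategoryTheory.SimplicialObject GrpCat) {a b c : ℕ} {f g : ℕ → ℕ}
    (hf : Nice a b f) (hg : Nice b c g) (x : G _⦋a⦌) :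
    grpOp G g b c (grpOp G f a b x) = grpOp G (fun t => f (g t)) a c x := by
  unfold grpOp
  rw [← mkHomF_comp hf hg, op_comp, G.map_comp]
  rfl

lemma simpOp_congr (X : SSet) {a b : ℕ} {f g : ℕ → ℕ} (h : ∀ t ≤ b, f t = g t) (x : X _⦋a⦌) :
    simpOp X f a b x = simpOp X g a b x := by
  unfold simpOp; rw [mkHomF_congr h]

lemma grpOp_congr (G : CategoryTheory.SimplicialObject GrpCat) {a b : ℕ} {f g : ℕ → ℕ}
    (h : ∀ t ≤ b, f t = g t) (x : G _⦋a⦌) : grpOp G f a b x = grpOp G g a b x := by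
  unfold grpOp; rw [mkHomF_congr h]

lemma mkHomF_id {a : ℕ} {f : ℕ → ℕ} (h : ∀ t ≤ a, f t = t) :
    mkHomF a a f = 𝟙 _ := by
  have hn : Nice a a f := ⟨fun u v huv hv => by rw [h u (le_trans huv hv), h v hv]; exact huv,
    le_of_eq (h a le_rfl)⟩
  ext t : 3
  apply Fin.ext
  rw [mkHomF_apply hn t, h t (Nat.lt_succ_iff.mp t.isLt)]
  rfl

lemma simpOp_id (X : SSet) {a : ℕ} {f : ℕ → ℕ} (h : ∀ t ≤ a, f t = t) (x : X _⦋a⦌) :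
    simpOp X f a a x = x := by
  unfold simpOp; rw [mkHomF_id h, op_id, X.map_id]; rfl

lemma grpOp_mul (G : CategoryTheory.SimplicialObject GrpCat) {a b : ℕ} (f : ℕ → ℕ)
    (g h : G _⦋a⦌) : grpOp G f a b (g * h) = grpOp G f a b g * grpOp G f a b h :=
  map_mul _ _ _

lemma grpOp_inv (G : CategoryTheory.SimplicialObject GrpCat) {a b : ℕ} (f : ℕ → ℕ)
    (g : G _⦋a⦌) : grpOp G f a b g⁻¹ = (grpOp G f a b g)⁻¹ :=
  map_inv _ _

lemma grpOp_one (G : CategoryTheory.SimplicialObject GrpCat) {a b : ℕ} (f : ℕ → ℕ) :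
    grpOp G f a b 1 = 1 := map_one _

lemma grpOp_prod (G : CategoryTheory.SimplicialObject GrpCat) {a b : ℕ} (f : ℕ → ℕ)
    (l : List (G _⦋a⦌)) : grpOp G f a b l.prod = (l.map (grpOp G f a b ·)).prod :=
  map_list_prod _ _

lemma DFun_cons_def (i1 : ℕ) (i' : List ℕ) (k : ℕ) :
    DFun (i1 :: i') k = if k < i1 then deltaFun (i1 - k) ∘ sigmaFun 0 ∘ derivedFun (DFun i' k)
      else if k = i1 then derivedFun (DFun i' k)
      else sigmaFun 0 ∘ derivedFun (DFun i' (k - 1)) := rfl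

lemma derivedFun_succ (f : ℕ → ℕ) (t : ℕ) : derivedFun f (t + 1) = f t + 1 := by
  unfold derivedFun; simp

lemma derivedFun_zero (f : ℕ → ℕ) : derivedFun f 0 = 0 := rfl

lemma sigmaFun0_succ (t : ℕ) : sigmaFun 0 (t + 1) = t := by
  unfold sigmaFun; split <;> omega

lemma deltaFun_mono (j : ℕ) : Monotone (deltaFun j) := by
  intro u v huv
  unfold deltaFun
  split <;> split <;> omega

lemma sigmaFun_mono (j : ℕ) : Monotone (sigmaFun j) := by
  intro u v huv
  unfold sigmaFun
  split <;> split <;> omega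

lemma derivedFun_mono {f : ℕ → ℕ} (hf : Monotone f) : Monotone (derivedFun f) := by
  intro u v huv
  unfold derivedFun
  split <;> split
  · exact le_rfl
  · omega
  · omega
  · exact Nat.succ_le_succ (hf (by omega))

lemma DFun_mono (i : List ℕ) (k : ℕ) : Monotone (DFun i k) := by
  induction i generalizing k with
  | nil => exact fun u v h => h
  | cons i1 i' ih =>
    rw [DFun_cons_def]
    split
    · exact (deltaFun_mono _).comp ((sigmaFun_mono _).comp (derivedFun_mono (ih k)))
    · split
      · exact derivedFun_mono (ih k)
      · exact (sigmaFun_mono _).comp (derivedFun_mono (ih (k-1)))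

lemma DFun_zero (i : List ℕ) (k : ℕ) : DFun i k 0 = 0 := by
  induction i generalizing k with
  | nil => rfl
  | cons i1 i' ih =>
    rw [DFun_cons_def]
    split
    · show deltaFun (i1 - k) (sigmaFun 0 (derivedFun (DFun i' k) 0)) = 0
      rw [derivedFun_zero]
      show deltaFun (i1 - k) 0 = 0
      unfold deltaFun; split <;> omega
    · split
      · rfl
      · rfl

lemma DFun_le (i : List ℕ) (k m : ℕ)
    (hS : ∀ s < i.length, i.getD s 0 + s + 1 ≤ i.length)
    (hk : k ≤ i.length)
    (hmk : i.length ≤ m + k) : DFun i k (m + k) ≤ m := by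
  induction i generalizing k m with
  | nil =>
    have : k = 0 := by simpa using hk
    subst this
    simpa [DFun] using le_rfl
  | cons i1 i' ih =>
    have hi1 : i1 ≤ i'.length := by
      have := hS 0 (by simp)
      simpa using this
    have hS' : ∀ s < i'.length, i'.getD s 0 + s + 1 ≤ i'.length := by
      intro s hs
      have h := hS (s+1) (by simp; omega)
      have h2 : (i1::i').getD (s+1) 0 = i'.getD s 0 := rfl
      rw [h2, List.length_cons] at h
      omega
    have hlen : i'.length + 1 ≤ m + k := by simpa using hmk
    have hk' : k ≤ i'.length + 1 := by simpa using hk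
    rw [DFun_cons_def]
    split
    · -- k < i1
      rename_i hki
      have hm1 : 1 ≤ m := by omega
      have hmk1 : 1 ≤ m + k := by omega
      show deltaFun (i1 - k) (sigmaFun 0 (derivedFun (DFun i' k) (m + k))) ≤ m
      obtain ⟨w, hw⟩ : ∃ w, m + k = w + 1 := ⟨m + k - 1, by omega⟩
      rw [hw, derivedFun_succ, sigmaFun0_succ]
      have h2 : DFun i' k w ≤ m - 1 := by
        have := ih k (m - 1) hS' (by omega) (by omega)
        have heq : m - 1 + k = w := by omega
        rwa [heq] at this
      unfold deltaFun
      split <;> omega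
    · split
      · -- k = i1
        rename_i h1 h2
        show derivedFun (DFun i' k) (m + k) ≤ m
        rcases Nat.eq_zero_or_pos (m + k) with h | h
        · rw [h, derivedFun_zero]; exact Nat.zero_le m
        · have hm1 : 1 ≤ m := by omega
          obtain ⟨w, hw⟩ : ∃ w, m + k = w + 1 := ⟨m + k - 1, by omega⟩
          rw [hw, derivedFun_succ]
          have := ih k (m - 1) hS' (by omega) (by omega)
          have heq : m - 1 + k = w := by omega
          rw [heq] at this
          omega
      · -- k > i1
        rename_i h1 h2
        have hk1 : 1 ≤ k := by omega
        show sigmaFun 0 (derivedFun (DFun i' (k-1)) (m + k)) ≤ m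
        obtain ⟨w, hw⟩ : ∃ w, m + k = w + 1 := ⟨m + k - 1, by omega⟩
        rw [hw, derivedFun_succ, sigmaFun0_succ]
        have := ih (k-1) m hS' (by omega) (by omega)
        have heq : m + (k-1) = w := by omega
        rwa [heq] at this

/-- For `s ≤ i1`: `DFun (i1::i') s (t+1) = deltaFun (i1 - s) (DFun i' s t)`. -/
lemma DFun_cons_le (i1 : ℕ) (i' : List ℕ) (s t : ℕ) (hs : s ≤ i1) :
    DFun (i1 :: i') s (t + 1) = deltaFun (i1 - s) (DFun i' s t) := by
  rw [DFun_cons_def]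
  rcases Nat.lt_or_ge s i1 with h | h
  · rw [if_pos h]
    show deltaFun (i1 - s) (sigmaFun 0 (derivedFun (DFun i' s) (t+1))) = _
    rw [derivedFun_succ, sigmaFun0_succ]
  · have hse : s = i1 := le_antisymm hs h
    rw [if_neg (by omega), if_pos hse]
    show derivedFun (DFun i' s) (t+1) = _
    rw [derivedFun_succ]
    have h0 : i1 - s = 0 := by omega
    rw [h0]
    show DFun i' s t + 1 = if DFun i' s t < 0 then DFun i' s t else DFun i' s t + 1
    simp

/-- For `s > i1`: `DFun (i1::i') s (t+1) = DFun i' (s-1) t`. -/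
lemma DFun_cons_gt (i1 : ℕ) (i' : List ℕ) (s t : ℕ) (hs : i1 < s) :
    DFun (i1 :: i') s (t + 1) = DFun i' (s - 1) t := by
  rw [DFun_cons_def, if_neg (by omega), if_neg (by omega)]
  show sigmaFun 0 (derivedFun (DFun i' (s-1)) (t+1)) = _
  rw [derivedFun_succ, sigmaFun0_succ]

lemma Nice_delta (j a : ℕ) (hj : j ≤ a + 1) : Nice (a + 1) a (deltaFun j) :=
  ⟨fun u v huv _ => deltaFun_mono j huv, by unfold deltaFun; split <;> omega⟩

lemma Nice_sigma (a : ℕ) (j : ℕ) (hj : j ≤ a) : Nice a (a + 1) (sigmaFun j) :=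
  ⟨fun u v huv _ => sigmaFun_mono j huv, by unfold sigmaFun; split <;> omega⟩

lemma Nice_shift (r a : ℕ) : Nice (a + r) a (fun t => t + r) :=
  ⟨fun u v huv _ => Nat.add_le_add_right huv r, le_rfl⟩

lemma Nice_DFun (i : List ℕ) (k m : ℕ)
    (hS : ∀ s < i.length, i.getD s 0 + s + 1 ≤ i.length)
    (hk : k ≤ i.length)
    (hmk : i.length ≤ m + k) : Nice m (m + k) (DFun i k) :=
  ⟨fun u v huv _ => DFun_mono i k huv, DFun_le i k m hS hk hmk⟩

lemma grpOp_id (G : CategoryTheory.SimplicialObject GrpCat) {a : ℕ} {f : ℕ → ℕ}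
    (h : ∀ t ≤ a, f t = t) (x : G _⦋a⦌) : grpOp G f a a x = x := by
  unfold grpOp; rw [mkHomF_id h, op_id, G.map_id]; rfl

lemma lemmaT_aux {X : SSet} {G : CategoryTheory.SimplicialObject GrpCat} (τ : TwistingFn X G) :
    ∀ N m' m (f : ℕ → ℕ), m + m' ≤ N →
    (∀ u v, u ≤ v → v ≤ m' → f u ≤ f v) → f 0 = 0 → f m' ≤ m →
    ∀ x : X _⦋m + 1⦌,
    τ.map m' (simpOp X (derivedFun f) (m + 1) (m' + 1) x) = grpOp G f m m' (τ.map m x) := by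
  intro N
  induction N with
  | zero =>
    intro m' m f hN hmono h0 hb x
    have hm : m = 0 := by omega
    have hm' : m' = 0 := by omega
    subst hm; subst hm'
    have hid : ∀ t ≤ 0 + 1, derivedFun f t = t := by
      intro t ht
      interval_cases t
      · rfl
      · rw [derivedFun_succ, h0]
    rw [simpOp_id X hid, grpOp_id G (fun t ht => by rw [Nat.le_zero.mp ht]; exact h0) (τ.map 0 x)]
  | succ N IH =>
    intro m' m f hN hmono h0 hb x
    by_cases hA : ∃ j, j < m' ∧ f j = f (j + 1)
    · -- degenerate case: f = g ∘ σ_j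
      obtain ⟨j, hj, hjeq⟩ := hA
      obtain ⟨m'', rfl⟩ : ∃ m'', m' = m'' + 1 := ⟨m' - 1, by omega⟩
      set g : ℕ → ℕ := fun t => f (deltaFun j t) with hg
      have hdelta_le : ∀ t ≤ m'', deltaFun j t ≤ m'' + 1 := by
        intro t ht; unfold deltaFun; split <;> omega
      have hgf : ∀ t ≤ m'' + 1, f t = g (sigmaFun j t) := by
        intro t ht
        show f t = f (deltaFun j (sigmaFun j t))
        rcases Nat.lt_trichotomy t j with h | h | h
        · have h1 : sigmaFun j t = t := by unfold sigmaFun; rw [if_pos (by omega)]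
          have h2 : deltaFun j t = t := by unfold deltaFun; rw [if_pos h]
          rw [h1, h2]
        · subst h
          have h1 : sigmaFun t t = t := by unfold sigmaFun; rw [if_pos le_rfl]
          have h2 : deltaFun t t = t + 1 := by unfold deltaFun; rw [if_neg (by omega)]
          rw [h1, h2]
          exact hjeq
        · have h1 : sigmaFun j t = t - 1 := by unfold sigmaFun; rw [if_neg (by omega)]
          have h2 : deltaFun j (t - 1) = t := by
            unfold deltaFun; rw [if_neg (by omega)]; omega
          rw [h1, h2]
      have hgmono : ∀ u v, u ≤ v → v ≤ m'' → g u ≤ g v := by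
        intro u v huv hv
        exact hmono _ _ (deltaFun_mono j huv) (by unfold deltaFun; split <;> omega)
      have hg0 : g 0 = 0 := by
        show f (deltaFun j 0) = 0
        unfold deltaFun
        split
        · exact h0
        · have : j = 0 := by omega
          subst this
          rw [← hjeq]
          exact h0
      have hgb : g m'' ≤ m := by
        refine le_trans (hmono _ _ ?_ le_rfl) hb
        unfold deltaFun; split <;> omega
      -- decompose simpOp
      have hcomp : simpOp X (derivedFun f) (m + 1) (m'' + 1 + 1) x
          = simpOp X (sigmaFun (j + 1)) (m'' + 1) (m'' + 1 + 1)
              (simpOp X (derivedFun g) (m + 1) (m'' + 1) x) := by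
        rw [simpOp_comp X (a := m + 1) (b := m'' + 1) (c := m'' + 1 + 1)
          ⟨fun u v huv hv => by
            match u, v with
            | 0, _ => rw [derivedFun_zero]; exact Nat.zero_le _
            | u'+1, v'+1 =>
              rw [derivedFun_succ, derivedFun_succ]
              exact Nat.succ_le_succ (hgmono _ _ (by omega) (by omega)),
           by rw [derivedFun_succ]; exact Nat.succ_le_succ hgb⟩
          (Nice_sigma (m'' + 1) (j + 1) (by omega))]
        apply simpOp_congr
        intro t ht
        match t with
        | 0 => rfl
        | t' + 1 =>
          rw [derivedFun_succ, hgf t' (by omega)]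
          have hsig : sigmaFun (j+1) (t'+1) = sigmaFun j t' + 1 := by
            unfold sigmaFun
            rcases le_or_gt (t'+1) (j+1) with h | h
            · rw [if_pos h, if_pos (by omega)]
            · rw [if_neg (by omega), if_neg (by omega)]
              omega
          rw [hsig, derivedFun_succ]
      rw [hcomp]
      rw [← τ.sk m'' j _ (by omega)]
      rw [IH m'' m g (by omega) hgmono hg0 hgb x]
      rw [grpOp_comp G ⟨fun u v huv hv => hgmono u v huv hv, hgb⟩
        (Nice_sigma m'' j (by omega))]
      exact (grpOp_congr G (fun t ht => (hgf t ht).symm) _)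
    · -- strictly monotone case
      push_neg at hA
      have hstrict : ∀ t, t < m' → f t < f (t + 1) := by
        intro t ht
        exact lt_of_le_of_ne (hmono t (t+1) (by omega) (by omega)) (hA t ht)
      have hchain : ∀ d u, u + d ≤ m' → f u + d ≤ f (u + d) := by
        intro d
        induction d with
        | zero => intro u _; simp
        | succ d ihd =>
          intro u hu
          have h1 := ihd u (by omega)
          have h2 := hstrict (u + d) (by omega)
          show f u + (d + 1) ≤ f (u + d + 1)
          omega
      rcases Nat.eq_or_lt_of_le (show m' ≤ m from by
        have := hchain m' 0 (by omega)
        simp [h0] at this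
        omega) with hmm | hmm
      · -- identity case
        have hft : ∀ t ≤ m', f t = t := by
          intro t ht
          have h1 : t ≤ f t := by
            have := hchain t 0 (by omega)
            simpa [h0] using this
          have h2 : f t + (m' - t) ≤ f m' := by
            have := hchain (m' - t) t (by omega)
            rwa [show t + (m' - t) = m' from by omega] at this
          omega
        subst hmm
        have hid : ∀ t ≤ m' + 1, derivedFun f t = t := by
          intro t ht
          match t with
          | 0 => rfl
          | t' + 1 => rw [derivedFun_succ, hft t' (by omega)]
        rw [simpOp_id X hid, grpOp_id G hft]
      · -- f misses some j ∈ [1, m]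
        have hSsub : (Finset.range (m' + 1)).image f ⊆ Finset.range (m + 1) := by
          intro v hv
          obtain ⟨u, hu, rfl⟩ := Finset.mem_image.mp hv
          exact Finset.mem_range.mpr (Nat.lt_succ_of_le (le_trans
            (hmono u m' (Nat.lt_succ_iff.mp (Finset.mem_range.mp hu)) le_rfl) hb))
        have hcard : ((Finset.range (m' + 1)).image f).card < (Finset.range (m + 1)).card := by
          calc ((Finset.range (m' + 1)).image f).card ≤ m' + 1 :=
                le_trans (Finset.card_image_le) (by simp)
            _ < (Finset.range (m + 1)).card := by rw [Finset.card_range]; omega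
        obtain ⟨j, hjmem, hjnot⟩ := Finset.exists_of_ssubset
          (lt_of_le_of_ne hSsub (fun heq => absurd (heq ▸ hcard) (lt_irrefl _)))
        have hjm : j ≤ m := Nat.lt_succ_iff.mp (Finset.mem_range.mp hjmem)
        have hjne : ∀ t ≤ m', f t ≠ j := by
          intro t ht hc
          exact hjnot (Finset.mem_image.mpr ⟨t, Finset.mem_range.mpr (by omega), hc⟩)
        have hj1 : 1 ≤ j := by
          rcases Nat.eq_zero_or_pos j with h | h
          · exact absurd (h ▸ h0) (hjne 0 (by omega))
          · exact h
        have hm1 : 1 ≤ m := le_trans hj1 hjm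
        set g : ℕ → ℕ := fun t => sigmaFun j (f t) with hg
        have hfg : ∀ t ≤ m', f t = deltaFun j (g t) := by
          intro t ht
          show f t = deltaFun j (sigmaFun j (f t))
          have hne := hjne t ht
          rcases Nat.lt_trichotomy (f t) j with h | h | h
          · have h1 : sigmaFun j (f t) = f t := by unfold sigmaFun; rw [if_pos (by omega)]
            have h2 : deltaFun j (f t) = f t := by unfold deltaFun; rw [if_pos h]
            rw [h1, h2]
          · exact absurd h hne
          · have h1 : sigmaFun j (f t) = f t - 1 := by unfold sigmaFun; rw [if_neg (by omega)]
            have h2 : deltaFun j (f t - 1) = f t := by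
              unfold deltaFun; rw [if_neg (by omega)]; omega
            rw [h1, h2]
        have hgmono : ∀ u v, u ≤ v → v ≤ m' → g u ≤ g v :=
          fun u v huv hv => sigmaFun_mono j (hmono u v huv hv)
        have hg0 : g 0 = 0 := by
          show sigmaFun j (f 0) = 0
          rw [h0]
          unfold sigmaFun
          rw [if_pos (by omega)]
        have hgb : g m' ≤ m - 1 := by
          show sigmaFun j (f m') ≤ m - 1
          have := hjne m' le_rfl
          unfold sigmaFun
          split <;> omega
        obtain ⟨mm, rfl⟩ : ∃ mm, m = mm + 1 := ⟨m - 1, by omega⟩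
        have hgb' : g m' ≤ mm := by omega
        have hcomp : simpOp X (derivedFun f) (mm + 1 + 1) (m' + 1) x
            = simpOp X (derivedFun g) (mm + 1) (m' + 1)
                (simpOp X (deltaFun (j + 1)) (mm + 1 + 1) (mm + 1) x) := by
          rw [simpOp_comp X (a := mm + 1 + 1) (b := mm + 1) (c := m' + 1)
            (Nice_delta (j+1) (mm + 1) (by omega))
            ⟨fun u v huv hv => by
              match u, v with
              | 0, _ => rw [derivedFun_zero]; exact Nat.zero_le _
              | u'+1, v'+1 =>
                rw [derivedFun_succ, derivedFun_succ]
                exact Nat.succ_le_succ (hgmono _ _ (by omega) (by omega)),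
             by rw [derivedFun_succ]; exact Nat.succ_le_succ hgb'⟩]
          apply simpOp_congr
          intro t ht
          match t with
          | 0 =>
            show derivedFun f 0 = deltaFun (j+1) (derivedFun g 0)
            rw [derivedFun_zero, derivedFun_zero]
            unfold deltaFun
            rw [if_pos (by omega)]
          | t' + 1 =>
            rw [derivedFun_succ, derivedFun_succ, hfg t' (by omega)]
            show deltaFun j (g t') + 1 = deltaFun (j + 1) (g t' + 1)
            unfold deltaFun
            rcases Nat.lt_or_ge (g t') j with h | h
            · rw [if_pos h, if_pos (by omega)]
            · rw [if_neg (by omega), if_neg (by omega)]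
        rw [hcomp]
        rw [IH m' mm g (by omega) hgmono hg0 hgb' _]
        rw [← τ.dk mm j x (by omega) (by omega)]
        rw [grpOp_comp G (Nice_delta j mm (by omega)) ⟨hgmono, hgb'⟩]
        exact grpOp_congr G (fun t ht => (hfg t ht).symm) _

lemma lemmaT {X : SSet} {G : CategoryTheory.SimplicialObject GrpCat} (τ : TwistingFn X G)
    (m' m : ℕ) (f : ℕ → ℕ)
    (hmono : ∀ u v, u ≤ v → v ≤ m' → f u ≤ f v) (h0 : f 0 = 0) (hb : f m' ≤ m)
    (x : X _⦋m + 1⦌) :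
    τ.map m' (simpOp X (derivedFun f) (m + 1) (m' + 1) x) = grpOp G f m m' (τ.map m x) :=
  lemmaT_aux τ (m + m') m' m f le_rfl hmono h0 hb x

lemma prod_cancel_head {M : Type*} [Group M] (A B : ℕ → M) (C : M) (n : ℕ)
    (hC : C * A 0 = 1) (h : ∀ r < n, A (r + 1) = B r) :
    C * ((List.range (n + 1)).map A).prod = ((List.range n).map B).prod := by
  rw [List.range_succ_eq_map]
  simp only [List.map_cons, List.prod_cons, List.map_map]
  rw [← mul_assoc, hC, one_mul]
  congr 1
  apply List.map_congr_left
  intro r hr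
  exact h r (List.mem_range.mp hr)

lemma prod_cancel_mid {M : Type*} [Group M] (A B : ℕ → M) (C : M) (m n : ℕ)
    (hmn : m + 1 ≤ n)
    (h1 : ∀ r < m, A r = B r)
    (h2 : A m = B m * C)
    (h3 : A (m + 1) = C⁻¹)
    (h4 : ∀ r, m + 2 ≤ r → r < n + 1 → A r = B (r - 1)) :
    ((List.range (n + 1)).map A).prod = ((List.range n).map B).prod := by
  obtain ⟨d, rfl⟩ : ∃ d, n = m + 1 + d := ⟨n - m - 1, by omega⟩
  rw [show m + 1 + d + 1 = (m + 2) + d from by omega,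
    List.range_add (n := m + 2) (m := d), List.map_append, List.prod_append, List.map_map,
    List.range_add (n := m + 1) (m := d), List.map_append, List.prod_append, List.map_map]
  congr 1
  · calc ((List.range (m + 2)).map A).prod
        = ((List.range (m + 1)).map A).prod * A (m + 1) := by
          rw [List.range_succ]; simp
      _ = (((List.range m).map A).prod * A m) * A (m + 1) := by
          rw [List.range_succ]; simp
      _ = (((List.range m).map B).prod * (B m * C)) * C⁻¹ := by
          rw [h2, h3]
          congr 3
          apply List.map_congr_left
          intro r hr
          exact h1 r (List.mem_range.mp hr)
      _ = ((List.range m).map B).prod * B m := by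
          rw [mul_assoc, mul_assoc]; group
      _ = ((List.range (m + 1)).map B).prod := by
          rw [List.range_succ]; simp
  · apply congrArg
    apply List.map_congr_left
    intro r hr
    show A (m + 2 + r) = B (m + 1 + r)
    rw [h4 (m + 2 + r) (by omega) (by
      have := List.mem_range.mp hr
      omega)]
    exact congrArg B (by omega)

lemma deltaFun0_eq (t : ℕ) : deltaFun 0 t = t + 1 := by
  unfold deltaFun; rw [if_neg (Nat.not_lt_zero t)]

lemma deltaFun_shift (a r t : ℕ) : deltaFun a t + r = deltaFun (a + r) (t + r) := by
  unfold deltaFun; split <;> split <;> omega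

lemma szStep {X : SSet} {G : CategoryTheory.SimplicialObject GrpCat} (τ : TwistingFn X G)
    (n i1 : ℕ) (j : List ℕ)
    (hS : ∀ s < n + 1, (i1 :: j).getD s 0 + s + 1 ≤ n + 1)
    (hlen : j.length = n)
    (x : X _⦋n + 1⦌) :
    (simpOp X (deltaFun 0) (n + 1) n (hatSz τ (n + 1) (i1 :: j) x).1,
      τ.map n (hatSz τ (n + 1) (i1 :: j) x).1
        * grpOp G (deltaFun 0) (n + 1) n (hatSz τ (n + 1) (i1 :: j) x).2)
      = hatSz τ n j (simpOp X (deltaFun i1) (n + 1) n x) := by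
  have hlc : (i1 :: j).length = n + 1 := by simp [hlen]
  have hi1 : i1 ≤ n := by have := hS 0 (by omega); simpa using this
  have hSj : ∀ s < j.length, j.getD s 0 + s + 1 ≤ j.length := by
    intro s hs
    have h := hS (s + 1) (by omega)
    have h2 : (i1 :: j).getD (s + 1) 0 = j.getD s 0 := rfl
    rw [h2] at h
    omega
  have hScons : ∀ s < (i1 :: j).length, (i1 :: j).getD s 0 + s + 1 ≤ (i1 :: j).length := by
    rw [hlc]; exact hS
  have hNcons : ∀ k m, k ≤ n + 1 → n + 1 = m + k → Nice m (n + 1) (DFun (i1 :: j) k) := by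
    intro k m hk hm
    have := Nice_DFun (i1 :: j) k m hScons (by omega) (by omega)
    rwa [← hm] at this
  have hNj : ∀ k m, k ≤ n → n = m + k → Nice m n (DFun j k) := by
    intro k m hk hm
    have := Nice_DFun j k m hSj (by omega) (by omega)
    rwa [← hm] at this
  refine Prod.ext ?_ ?_
  · -- x-component
    show simpOp X (deltaFun 0) (n + 1) n (simpOp X (DFun (i1 :: j) 0) (n + 1) (n + 1) x)
        = simpOp X (DFun j 0) n n (simpOp X (deltaFun i1) (n + 1) n x)
    rw [simpOp_comp X (hNcons 0 (n + 1) (by omega) (by omega)) (Nice_delta 0 n (by omega))]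
    rw [simpOp_comp X (Nice_delta i1 n (by omega)) (hNj 0 n (by omega) (by omega))]
    apply simpOp_congr
    intro t ht
    rw [deltaFun0_eq]
    have := DFun_cons_le i1 j 0 t (Nat.zero_le i1)
    rwa [Nat.sub_zero] at this
  · -- group component
    show τ.map n (simpOp X (DFun (i1 :: j) 0) (n + 1) (n + 1) x)
        * grpOp G (deltaFun 0) (n + 1) n (hatSzG τ (n + 1) (i1 :: j) x)
      = hatSzG τ n j (simpOp X (deltaFun i1) (n + 1) n x)
    set A : ℕ → (G _⦋n⦌ : Type _) := fun r =>
      grpOp G (fun t => DFun (i1 :: j) (r + 1) (t + 1)) (n + 1 - (r + 1)) n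
        ((τ.map (n + 1 - (r + 1))
          (simpOp X (fun t => t + r) (n + 1) ((n + 1 - (r + 1)) + 1) x))⁻¹) with hA
    set B : ℕ → (G _⦋n⦌ : Type _) := fun r =>
      grpOp G (DFun j (r + 1)) (n - (r + 1)) n
        ((τ.map (n - (r + 1)) (simpOp X (fun t => t + r) n ((n - (r + 1)) + 1)
          (simpOp X (deltaFun i1) (n + 1) n x)))⁻¹) with hB
    have hgB : hatSzG τ n j (simpOp X (deltaFun i1) (n + 1) n x)
        = ((List.range n).map B).prod := rfl
    have hgA : grpOp G (deltaFun 0) (n + 1) n (hatSzG τ (n + 1) (i1 :: j) x)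
        = ((List.range (n + 1)).map A).prod := by
      show grpOp G (deltaFun 0) (n + 1) n
        (((List.range (n + 1)).map _).prod) = _
      rw [grpOp_prod, List.map_map]
      apply congrArg List.prod
      apply List.map_congr_left
      intro r hr
      have hrn : r < n + 1 := List.mem_range.mp hr
      show grpOp G (deltaFun 0) (n + 1) n
          (grpOp G (DFun (i1 :: j) (r + 1)) (n + 1 - (r + 1)) (n + 1)
            ((τ.map (n + 1 - (r + 1))
              (simpOp X (fun t => t + r) (n + 1) ((n + 1 - (r + 1)) + 1) x))⁻¹)) = A r
      rw [grpOp_comp G (hNcons (r + 1) (n + 1 - (r + 1)) (by omega) (by omega))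
        (Nice_delta 0 n (by omega))]
      exact grpOp_congr G (fun t _ => by rw [deltaFun0_eq]) _
    rw [hgA, hgB]
    rcases Nat.eq_zero_or_pos i1 with hz | hpos
    · subst hz
      have hL : τ.map n (simpOp X (DFun (0 :: j) 0) (n + 1) (n + 1) x)
          = grpOp G (DFun j 0) n n (τ.map n x) := by
        have hfun : ∀ t ≤ n + 1, DFun (0 :: j) 0 t = derivedFun (DFun j 0) t := by
          intro t _
          rw [DFun_cons_def, if_neg (lt_irrefl 0), if_pos rfl]
        rw [simpOp_congr X hfun x]
        exact lemmaT τ n n (DFun j 0) (fun u v huv _ => DFun_mono j 0 huv)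
          (DFun_zero j 0) ((hNj 0 n (by omega) (by omega)).2) x
      rw [hL]
      apply prod_cancel_head
      · -- C * A 0 = 1
        rw [hA]
        show grpOp G (DFun j 0) n n (τ.map n x)
            * grpOp G (fun t => DFun (0 :: j) 1 (t + 1)) n n
              ((τ.map n (simpOp X (fun t => t + 0) (n + 1) (n + 1) x))⁻¹) = 1
        rw [simpOp_id X (show ∀ t ≤ n + 1, t + 0 = t from fun t _ => rfl) x]
        rw [grpOp_congr G
          (show ∀ t ≤ n, DFun (0 :: j) 1 (t + 1) = DFun j 0 t from
            fun t _ => DFun_cons_gt 0 j 1 t (by omega)) _]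
        rw [grpOp_inv]
        exact mul_inv_cancel _
      · -- A (r+1) = B r
        intro r hr
        rw [hA, hB]
        show grpOp G (fun t => DFun (0 :: j) (r + 1 + 1) (t + 1)) (n + 1 - (r + 1 + 1)) n
            ((τ.map (n + 1 - (r + 1 + 1))
              (simpOp X (fun t => t + (r + 1)) (n + 1) ((n + 1 - (r + 1 + 1)) + 1) x))⁻¹)
          = grpOp G (DFun j (r + 1)) (n - (r + 1)) n
            ((τ.map (n - (r + 1)) (simpOp X (fun t => t + r) n ((n - (r + 1)) + 1)
              (simpOp X (deltaFun 0) (n + 1) n x)))⁻¹)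
        obtain ⟨q, hq⟩ : ∃ q, n = r + q + 1 := ⟨n - r - 1, by omega⟩
        rw [show n + 1 - (r + 1 + 1) = q from by omega,
          show n - (r + 1) = q from by omega]
        have hshift : Nice n (q + 1) (fun t => t + r) := by
          have := Nice_shift r (q + 1)
          rwa [show q + 1 + r = n from by omega] at this
        rw [simpOp_comp X (Nice_delta 0 n (by omega)) hshift]
        rw [simpOp_congr X
          (show ∀ t ≤ q + 1, deltaFun 0 (t + r) = t + (r + 1) from
            fun t _ => by rw [deltaFun0_eq, Nat.add_assoc]) _]
        rw [grpOp_congr G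
          (show ∀ t ≤ n, DFun (0 :: j) (r + 1 + 1) (t + 1) = DFun j (r + 1) t from
            fun t _ => DFun_cons_gt 0 j (r + 1 + 1) t (by omega)) _]
    · -- i1 ≥ 1
      obtain ⟨i0, rfl⟩ : ∃ i0, i1 = i0 + 1 := ⟨i1 - 1, by omega⟩
      have hL : τ.map n (simpOp X (DFun ((i0 + 1) :: j) 0) (n + 1) (n + 1) x) = 1 := by
        have hfun : ∀ t ≤ n + 1, DFun ((i0 + 1) :: j) 0 t
            = deltaFun (i0 + 1) (sigmaFun 0 (derivedFun (DFun j 0) t)) := by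
          intro t _
          rw [DFun_cons_def, if_pos (by omega)]
          rfl
        rw [simpOp_congr X hfun x]
        have nd : Nice (n + 1) (n + 1) (derivedFun (DFun j 0)) := by
          refine ⟨fun u v huv _ => derivedFun_mono (DFun_mono j 0) huv, ?_⟩
          rw [derivedFun_succ]
          have := (hNj 0 n (by omega) (by omega)).2
          omega
        have nc : Nice (n + 1) (n + 1) (fun t => deltaFun (i0 + 1) (sigmaFun 0 t)) := by
          refine ⟨fun u v huv _ => deltaFun_mono _ (sigmaFun_mono _ huv), ?_⟩
          show deltaFun (i0 + 1) (sigmaFun 0 (n + 1)) ≤ n + 1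
          rw [sigmaFun0_succ]
          unfold deltaFun; split <;> omega
        have e1 := simpOp_comp X (Nice_delta (i0 + 1) n (by omega)) (Nice_sigma n 0 (by omega)) x
        have e2 := simpOp_comp X nc nd x
        have e3 : τ.map n (simpOp X (fun t => deltaFun (i0 + 1) (sigmaFun 0 (derivedFun (DFun j 0) t)))
              (n + 1) (n + 1) x)
            = τ.map n (simpOp X (derivedFun (DFun j 0)) (n + 1) (n + 1)
                (simpOp X (sigmaFun 0) n (n + 1) (simpOp X (deltaFun (i0 + 1)) (n + 1) n x))) := by
          rw [e1]
          try rw [e2]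
          try exact congrArg (τ.map n) (simpOp_congr X (fun t _ => rfl) x)
        rw [e3]
        rw [lemmaT τ n n (DFun j 0) (fun u v huv _ => DFun_mono j 0 huv)
          (DFun_zero j 0) ((hNj 0 n (by omega) (by omega)).2) _]
        rw [τ.s0 n _, grpOp_one]
      rw [hL, one_mul]
      apply prod_cancel_mid A B
        (grpOp G (DFun j (i0 + 1)) (n - (i0 + 1)) n
          (τ.map (n - (i0 + 1))
            (simpOp X (fun t => t + (i0 + 1)) (n + 1) ((n - (i0 + 1)) + 1) x)))
        i0 n (by omega)
      · -- h1 : ∀ r < i0, A r = B r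
        intro r hr
        rw [hA, hB]
        show grpOp G (fun t => DFun ((i0 + 1) :: j) (r + 1) (t + 1)) (n + 1 - (r + 1)) n
            ((τ.map (n + 1 - (r + 1))
              (simpOp X (fun t => t + r) (n + 1) ((n + 1 - (r + 1)) + 1) x))⁻¹)
          = grpOp G (DFun j (r + 1)) (n - (r + 1)) n
            ((τ.map (n - (r + 1)) (simpOp X (fun t => t + r) n ((n - (r + 1)) + 1)
              (simpOp X (deltaFun (i0 + 1)) (n + 1) n x)))⁻¹)
        obtain ⟨q, hq⟩ : ∃ q, n = r + q + 2 := ⟨n - r - 2, by omega⟩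
        rw [show n + 1 - (r + 1) = q + 1 + 1 from by omega,
          show n - (r + 1) = q + 1 from by omega]
        rw [grpOp_congr G
          (show ∀ t ≤ n, DFun ((i0 + 1) :: j) (r + 1) (t + 1)
              = deltaFun (i0 - r) (DFun j (r + 1) t) from
            fun t _ => by rw [DFun_cons_le (i0 + 1) j (r + 1) t (by omega), Nat.succ_sub_succ]) _]
        rw [← grpOp_comp G (Nice_delta (i0 - r) (q + 1) (by omega))
          (hNj (r + 1) (q + 1) (by omega) (by omega)) _]
        rw [grpOp_inv]
        have hdk : grpOp G (deltaFun (i0 - r)) (q + 1 + 1) (q + 1)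
              (τ.map (q + 1 + 1) (simpOp X (fun t => t + r) (n + 1) (q + 1 + 1 + 1) x))
            = τ.map (q + 1) (simpOp X (deltaFun (i0 - r + 1)) (q + 1 + 1 + 1) (q + 1 + 1)
                (simpOp X (fun t => t + r) (n + 1) (q + 1 + 1 + 1) x)) :=
          τ.dk (q + 1) (i0 - r) _ (by omega) (by omega)
        rw [hdk]
        have Nf : Nice (n + 1) (q + 1 + 1 + 1) (fun t => t + r) := by
          have := Nice_shift r (q + 1 + 1 + 1)
          rwa [show q + 1 + 1 + 1 + r = n + 1 from by omega] at this
        have Ng : Nice n (q + 1 + 1) (fun t => t + r) := by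
          have := Nice_shift r (q + 1 + 1)
          rwa [show q + 1 + 1 + r = n from by omega] at this
        have hXe : simpOp X (deltaFun (i0 - r + 1)) (q + 1 + 1 + 1) (q + 1 + 1)
              (simpOp X (fun t => t + r) (n + 1) (q + 1 + 1 + 1) x)
            = simpOp X (fun t => t + r) n (q + 1 + 1)
                (simpOp X (deltaFun (i0 + 1)) (n + 1) n x) := by
          rw [simpOp_comp X Nf (Nice_delta (i0 - r + 1) (q + 1 + 1) (by omega))]
          rw [simpOp_comp X (Nice_delta (i0 + 1) n (by omega)) Ng]
          apply simpOp_congr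
          intro t ht
          show deltaFun (i0 - r + 1) t + r = deltaFun (i0 + 1) (t + r)
          rw [deltaFun_shift]
          congr 1
          omega
        rw [hXe]
      · -- h2 : A i0 = B i0 * C
        rw [hA, hB]
        show grpOp G (fun t => DFun ((i0 + 1) :: j) (i0 + 1) (t + 1)) (n + 1 - (i0 + 1)) n
            ((τ.map (n + 1 - (i0 + 1))
              (simpOp X (fun t => t + i0) (n + 1) ((n + 1 - (i0 + 1)) + 1) x))⁻¹)
          = grpOp G (DFun j (i0 + 1)) (n - (i0 + 1)) n
            ((τ.map (n - (i0 + 1)) (simpOp X (fun t => t + i0) n ((n - (i0 + 1)) + 1)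
              (simpOp X (deltaFun (i0 + 1)) (n + 1) n x)))⁻¹)
            * grpOp G (DFun j (i0 + 1)) (n - (i0 + 1)) n
              (τ.map (n - (i0 + 1))
                (simpOp X (fun t => t + (i0 + 1)) (n + 1) ((n - (i0 + 1)) + 1) x))
        obtain ⟨q, hq⟩ : ∃ q, n = i0 + q + 1 := ⟨n - i0 - 1, by omega⟩
        rw [show n + 1 - (i0 + 1) = q + 1 from by omega,
          show n - (i0 + 1) = q from by omega]
        rw [grpOp_congr G
          (show ∀ t ≤ n, DFun ((i0 + 1) :: j) (i0 + 1) (t + 1)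
              = deltaFun 0 (DFun j (i0 + 1) t) from
            fun t _ => by rw [DFun_cons_le (i0 + 1) j (i0 + 1) t le_rfl, Nat.sub_self]) _]
        rw [← grpOp_comp G (Nice_delta 0 q (by omega))
          (hNj (i0 + 1) q (by omega) (by omega)) _]
        rw [grpOp_inv]
        have hd0 : grpOp G (deltaFun 0) (q + 1) q
              (τ.map (q + 1) (simpOp X (fun t => t + i0) (n + 1) (q + 1 + 1) x))
            = (τ.map q (simpOp X (deltaFun 0) (q + 1 + 1) (q + 1)
                (simpOp X (fun t => t + i0) (n + 1) (q + 1 + 1) x)))⁻¹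
              * τ.map q (simpOp X (deltaFun 1) (q + 1 + 1) (q + 1)
                (simpOp X (fun t => t + i0) (n + 1) (q + 1 + 1) x)) :=
          τ.d0 q _
        rw [hd0, mul_inv_rev, inv_inv]
        have Nf : Nice (n + 1) (q + 1 + 1) (fun t => t + i0) := by
          have := Nice_shift i0 (q + 1 + 1)
          rwa [show q + 1 + 1 + i0 = n + 1 from by omega] at this
        have Ng : Nice n (q + 1) (fun t => t + i0) := by
          have := Nice_shift i0 (q + 1)
          rwa [show q + 1 + i0 = n from by omega] at this
        have hE0 : simpOp X (deltaFun 0) (q + 1 + 1) (q + 1)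
              (simpOp X (fun t => t + i0) (n + 1) (q + 1 + 1) x)
            = simpOp X (fun t => t + (i0 + 1)) (n + 1) (q + 1) x := by
          rw [simpOp_comp X Nf (Nice_delta 0 (q + 1) (by omega))]
          apply simpOp_congr
          intro t ht
          show deltaFun 0 t + i0 = t + (i0 + 1)
          rw [deltaFun0_eq]
          omega
        have hE1 : simpOp X (deltaFun 1) (q + 1 + 1) (q + 1)
              (simpOp X (fun t => t + i0) (n + 1) (q + 1 + 1) x)
            = simpOp X (fun t => t + i0) n (q + 1)
                (simpOp X (deltaFun (i0 + 1)) (n + 1) n x) := by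
          rw [simpOp_comp X Nf (Nice_delta 1 (q + 1) (by omega))]
          rw [simpOp_comp X (Nice_delta (i0 + 1) n (by omega)) Ng]
          apply simpOp_congr
          intro t ht
          show deltaFun 1 t + i0 = deltaFun (i0 + 1) (t + i0)
          rw [deltaFun_shift]
          congr 1
          omega
        rw [hE0, hE1, grpOp_mul]
      · -- h3 : A (i0 + 1) = C⁻¹
        rw [hA]
        show grpOp G (fun t => DFun ((i0 + 1) :: j) (i0 + 1 + 1) (t + 1)) (n + 1 - (i0 + 1 + 1)) n
            ((τ.map (n + 1 - (i0 + 1 + 1))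
              (simpOp X (fun t => t + (i0 + 1)) (n + 1) ((n + 1 - (i0 + 1 + 1)) + 1) x))⁻¹)
          = (grpOp G (DFun j (i0 + 1)) (n - (i0 + 1)) n
              (τ.map (n - (i0 + 1))
                (simpOp X (fun t => t + (i0 + 1)) (n + 1) ((n - (i0 + 1)) + 1) x)))⁻¹
        rw [show n + 1 - (i0 + 1 + 1) = n - (i0 + 1) from by omega]
        rw [grpOp_congr G
          (show ∀ t ≤ n, DFun ((i0 + 1) :: j) (i0 + 1 + 1) (t + 1) = DFun j (i0 + 1) t from
            fun t _ => DFun_cons_gt (i0 + 1) j (i0 + 1 + 1) t (by omega)) _]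
        rw [grpOp_inv]
      · -- h4 : ∀ r, i0 + 2 ≤ r → r < n + 1 → A r = B (r - 1)
        intro r hr1 hr2
        obtain ⟨r', rfl⟩ : ∃ r', r = r' + 1 := ⟨r - 1, by omega⟩
        show A (r' + 1) = B r'
        rw [hA, hB]
        show grpOp G (fun t => DFun ((i0 + 1) :: j) (r' + 1 + 1) (t + 1)) (n + 1 - (r' + 1 + 1)) n
            ((τ.map (n + 1 - (r' + 1 + 1))
              (simpOp X (fun t => t + (r' + 1)) (n + 1) ((n + 1 - (r' + 1 + 1)) + 1) x))⁻¹)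
          = grpOp G (DFun j (r' + 1)) (n - (r' + 1)) n
            ((τ.map (n - (r' + 1)) (simpOp X (fun t => t + r') n ((n - (r' + 1)) + 1)
              (simpOp X (deltaFun (i0 + 1)) (n + 1) n x)))⁻¹)
        obtain ⟨q, hq⟩ : ∃ q, n = r' + q + 1 := ⟨n - r' - 1, by omega⟩
        rw [show n + 1 - (r' + 1 + 1) = q from by omega,
          show n - (r' + 1) = q from by omega]
        rw [grpOp_congr G
          (show ∀ t ≤ n, DFun ((i0 + 1) :: j) (r' + 1 + 1) (t + 1) = DFun j (r' + 1) t from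
            fun t _ => DFun_cons_gt (i0 + 1) j (r' + 1 + 1) t (by omega)) _]
        have Ng : Nice n (q + 1) (fun t => t + r') := by
          have := Nice_shift r' (q + 1)
          rwa [show q + 1 + r' = n from by omega] at this
        have hXe : simpOp X (fun t => t + r') n (q + 1)
              (simpOp X (deltaFun (i0 + 1)) (n + 1) n x)
            = simpOp X (fun t => t + (r' + 1)) (n + 1) (q + 1) x := by
          rw [simpOp_comp X (Nice_delta (i0 + 1) n (by omega)) Ng]
          apply simpOp_congr
          intro t ht
          show deltaFun (i0 + 1) (t + r') = t + (r' + 1)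
          unfold deltaFun
          rw [if_neg (by omega)]
          omega
        rw [hXe]

/-- inserting map: `u ↦ u` if `u ≤ m`, else `u + 1`. -/
def insFun (m : ℕ) : ℕ → ℕ := fun u => if u ≤ m then u else u + 1

lemma eraseIdx_map (g : ℕ → ℕ) (L : List ℕ) (a : ℕ) :
    (L.map g).eraseIdx a = (L.eraseIdx a).map g := by
  induction L generalizing a with
  | nil => rfl
  | cons b L ih =>
    cases a with
    | zero => rfl
    | succ a => simp only [List.map_cons, List.eraseIdx_cons_succ, ih]

lemma range_eraseIdx (n m : ℕ) (hm : m ≤ n) :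
    (List.range (n + 2)).eraseIdx (m + 1) = (List.range (n + 1)).map (insFun m) := by
  apply List.ext_getElem
  · rw [List.length_eraseIdx]
    simp
    omega
  · intro t h1 h2
    have ht : t < n + 1 := by
      have := h2; simpa using this
    rcases Nat.lt_or_ge t (m + 1) with h | h
    · rw [List.getElem_eraseIdx_of_lt h1 h]
      simp only [List.getElem_range, List.getElem_map, insFun]
      split <;> omega
    · rw [List.getElem_eraseIdx_of_ge h1 h]
      simp only [List.getElem_range, List.getElem_map, insFun]
      split <;> omega

lemma restAfter_cons (n i1 r : ℕ) (jl : List ℕ) (h : i1 ≤ n) :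
    restAfter (n + 1) (i1 :: jl) (r + 1) = (restAfter n jl r).map (insFun i1) := by
  have haux : ∀ (as : List ℕ) (L : List ℕ),
      as.foldl (fun L a => L.eraseIdx (a + 1)) (L.map (insFun i1))
        = (as.foldl (fun L a => L.eraseIdx (a + 1)) L).map (insFun i1) := by
    intro as
    induction as with
    | nil => intro L; rfl
    | cons a as ih =>
      intro L
      show (as.foldl _ ((L.map (insFun i1)).eraseIdx (a + 1))) = _
      rw [eraseIdx_map]
      exact ih _
  show ((i1 :: jl).take (r + 1)).foldl (fun L a => L.eraseIdx (a + 1)) (List.range (n + 2))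
      = _
  have ht : (i1 :: jl).take (r + 1) = i1 :: jl.take r := rfl
  rw [ht]
  show (jl.take r).foldl (fun L a => L.eraseIdx (a + 1)) ((List.range (n + 2)).eraseIdx (i1 + 1))
      = _
  rw [range_eraseIdx n i1 h, haux]
  rfl

lemma sigmaFun_eval_le (j v : ℕ) (h : v ≤ j) : sigmaFun j v = v := by
  unfold sigmaFun; rw [if_pos h]

lemma sigmaFun_eval_gt (j v : ℕ) (h : j < v) : sigmaFun j v = v - 1 := by
  unfold sigmaFun; rw [if_neg (by omega)]

lemma insFun_eval_le (j v : ℕ) (h : v ≤ j) : insFun j v = v := by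
  unfold insFun; rw [if_pos h]

lemma insFun_eval_gt (j v : ℕ) (h : j < v) : insFun j v = v + 1 := by
  unfold insFun; rw [if_neg (by omega)]

lemma mono_of_step (p : ℕ → ℕ) (K : ℕ) (h : ∀ s < K, p s < p (s + 1)) :
    ∀ u v, u ≤ v → v ≤ K → p u ≤ p v := by
  intro u v huv hv
  induction v with
  | zero =>
    have : u = 0 := by omega
    subst this; exact le_rfl
  | succ v ihv =>
    rcases Nat.eq_or_lt_of_le huv with rfl | hlt
    · exact le_rfl
    · exact le_trans (ihv (by omega) (by omega)) (le_of_lt (h v (by omega)))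

lemma strict_of_step (p : ℕ → ℕ) (K : ℕ) (h : ∀ s < K, p s < p (s + 1)) :
    ∀ u v, u < v → v ≤ K → p u < p v := by
  intro u v huv hv
  have h1 := h u (by omega)
  have h2 := mono_of_step p K h (u + 1) v (by omega) hv
  omega

lemma mainAux (X : SSet) (G : CategoryTheory.SimplicialObject GrpCat)
    (τ : TwistingFn X G) (k : ℕ) :
    ∀ (l : ℕ) (i : List ℕ), memS (k + l) (k + l) i →
    ∀ (p : ℕ → ℕ), p 0 = 0 → p (k + 1) = k + l + 1 →
    (∀ s < k + 1, p s < p (s + 1)) →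
    restList (k + l + 1) (i.take l) = (List.range (k + 2)).map p →
    ∀ x : X _⦋k + l⦌,
    twD0pow τ l k (hatSz τ (k + l) i x)
      = hatSz τ k (i.drop l) (simpOp X (fun t => p (t + 1) - 1) (k + l) k x) := by
  intro l
  induction l with
  | zero =>
    intro i hi p hp0 hpk hmono hrest x
    have hp : ∀ s, s ≤ k + 1 → p s = s := by
      intro s hs
      have h := congrArg (fun L => L[s]?) hrest
      have h' : (List.range (k + 2))[s]? = ((List.range (k + 2)).map p)[s]? := h
      rw [List.getElem?_range (by omega), List.getElem?_map,
        List.getElem?_range (by omega)] at h'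
      simp only [Option.map_some, Option.some.injEq] at h'
      omega
    show hatSz τ k i x = hatSz τ k i (simpOp X (fun t => p (t + 1) - 1) k k x)
    rw [simpOp_id (a := k) (f := fun t => p (t + 1) - 1) X
      (fun t ht => by show p (t + 1) - 1 = t; rw [hp (t + 1) (by omega)]; omega) x]
  | succ l ih =>
    intro i hi p hp0 hpk hmono hrest x
    obtain ⟨i1, j, rfl⟩ : ∃ i1 j, i = i1 :: j := by
      cases i with
      | nil => exfalso; have := hi.1; simp at this
      | cons a b => exact ⟨a, b, rfl⟩
    have hlen : j.length = k + l := by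
      have := hi.1; simp at this; omega
    have hi1 : i1 ≤ k + l := by
      have := hi.2 0 (by omega)
      have h2 : (i1 :: j).getD 0 0 = i1 := rfl
      rw [h2] at this; omega
    have hS' : ∀ s < k + l + 1, (i1 :: j).getD s 0 + s + 1 ≤ k + l + 1 := by
      intro s hs
      have := hi.2 s (by omega)
      omega
    have hlt : (j.take l).length = l := by
      rw [List.length_take]; omega
    have hrest2 : (restList (k + l + 1) (j.take l)).map (insFun i1)
        = (List.range (k + 2)).map p := by
      have e0 : ((i1 :: j).take (l + 1)).length = l + 1 := by
        rw [List.length_take]; simp; omega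
      have e1 : restList (k + (l + 1) + 1) ((i1 :: j).take (l + 1))
          = (restAfter (k + l + 1) (j.take l) l).map (insFun i1) := by
        show restAfter (k + (l + 1) + 1) ((i1 :: j).take (l + 1))
            ((i1 :: j).take (l + 1)).length = _
        rw [e0]
        exact restAfter_cons (k + l + 1) i1 l (j.take l) (by omega)
      have e2 : restAfter (k + l + 1) (j.take l) l = restList (k + l + 1) (j.take l) := by
        show _ = restAfter (k + l + 1) (j.take l) (j.take l).length
        rw [hlt]
      rw [← hrest, e1, e2]
    have hLlen : (restList (k + l + 1) (j.take l)).length = k + 2 := by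
      have := congrArg List.length hrest2
      simpa using this
    have hKey : ∀ s (hs : s < k + 2),
        insFun i1 ((restList (k + l + 1) (j.take l))[s]'(by rw [hLlen]; omega)) = p s := by
      intro s hs
      have h := congrArg (fun L => L[s]?) hrest2
      have h' : ((restList (k + l + 1) (j.take l)).map (insFun i1))[s]?
          = ((List.range (k + 2)).map p)[s]? := h
      rw [List.getElem?_map, List.getElem?_map,
        List.getElem?_eq_getElem (by omega : s < (restList (k + l + 1) (j.take l)).length),
        List.getElem?_range hs] at h'
      simp only [Option.map_some, Option.some.injEq] at h'
      exact h'
    have hpne : ∀ s, s ≤ k + 1 → p s ≠ i1 + 1 := by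
      intro s hs
      rw [← hKey s (by omega)]
      unfold insFun; split <;> omega
    have hp0' : sigmaFun i1 (p 0) = 0 := by
      rw [hp0, sigmaFun_eval_le i1 0 (by omega)]
    have hpk' : sigmaFun i1 (p (k + 1)) = k + l + 1 := by
      rw [hpk, sigmaFun_eval_gt i1 _ (by omega)]
      omega
    have hmono' : ∀ s < k + 1, sigmaFun i1 (p s) < sigmaFun i1 (p (s + 1)) := by
      intro s hs
      have h1 := hmono s hs
      have h2 := hpne s (by omega)
      have h3 := hpne (s + 1) (by omega)
      rcases le_or_gt (p s) i1 with h | h <;> rcases le_or_gt (p (s + 1)) i1 with h' | h'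
      · rw [sigmaFun_eval_le _ _ h, sigmaFun_eval_le _ _ h']; omega
      · rw [sigmaFun_eval_le _ _ h, sigmaFun_eval_gt _ _ h']; omega
      · omega
      · rw [sigmaFun_eval_gt _ _ h, sigmaFun_eval_gt _ _ h']; omega
    have hrest' : restList (k + l + 1) (j.take l)
        = (List.range (k + 2)).map (fun s => sigmaFun i1 (p s)) := by
      apply List.ext_getElem
      · rw [hLlen]; simp
      · intro t h1 h2
        have ht : t < k + 2 := by omega
        rw [List.getElem_map, List.getElem_range]
        have h3 := hKey t ht
        set v := (restList (k + l + 1) (j.take l))[t]'(by omega) with hv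
        rcases le_or_gt v i1 with h | h
        · rw [insFun_eval_le _ _ h] at h3
          rw [← h3, sigmaFun_eval_le _ _ h]
        · rw [insFun_eval_gt _ _ h] at h3
          rw [← h3, sigmaFun_eval_gt _ _ (by omega)]
          omega
    have hij : memS (k + l) (k + l) j := by
      refine ⟨by omega, fun t htl => ?_⟩
      have := hi.2 (t + 1) (by omega)
      have h2 : (i1 :: j).getD (t + 1) 0 = j.getD t 0 := rfl
      rw [h2] at this
      omega
    have hstep := szStep τ (k + l) i1 j hS' hlen x
    have e : twD0pow τ (l + 1) k (hatSz τ (k + (l + 1)) (i1 :: j) x)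
        = twD0pow τ l k (hatSz τ (k + l) j
            (simpOp X (deltaFun i1) (k + l + 1) (k + l) x)) :=
      congrArg (twD0pow τ l k) hstep
    rw [e]
    rw [ih j hij (fun s => sigmaFun i1 (p s)) hp0' hpk' hmono' hrest'
      (simpOp X (deltaFun i1) (k + l + 1) (k + l) x)]
    show hatSz τ k (j.drop l) _ = hatSz τ k (j.drop l) _
    apply congrArg (hatSz τ k (j.drop l))
    have hplt := strict_of_step p (k + 1) hmono
    have hmono'' := mono_of_step (fun s => sigmaFun i1 (p s)) (k + 1) hmono'
    have hp1 : ∀ t, t ≤ k → 1 ≤ p (t + 1) := by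
      intro t ht
      have := hplt 0 (t + 1) (by omega) (by omega)
      omega
    have hNp : Nice (k + l) k (fun t => sigmaFun i1 (p (t + 1)) - 1) := by
      refine ⟨fun u v huv hv => ?_, ?_⟩
      · show sigmaFun i1 (p (u + 1)) - 1 ≤ sigmaFun i1 (p (v + 1)) - 1
        have h5 : sigmaFun i1 (p (u + 1)) ≤ sigmaFun i1 (p (v + 1)) :=
          hmono'' (u + 1) (v + 1) (by omega) (by omega)
        omega
      · show sigmaFun i1 (p (k + 1)) - 1 ≤ k + l
        rw [hpk']
        omega
    rw [simpOp_comp X (Nice_delta i1 (k + l) (by omega)) hNp]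
    apply simpOp_congr
    intro t ht
    show deltaFun i1 (sigmaFun i1 (p (t + 1)) - 1) = p (t + 1) - 1
    have h2 := hpne (t + 1) (by omega)
    have h3 := hp1 t ht
    rcases le_or_gt (p (t + 1)) i1 with h | h
    · rw [sigmaFun_eval_le _ _ h]
      unfold deltaFun; rw [if_pos (by omega)]
    · rw [sigmaFun_eval_gt _ _ h]
      unfold deltaFun; rw [if_neg (by omega)]
      omega


open Simplicial in
/-- Let `n = k + l` with `k, l ≥ 0`, write `i ∈ S_n` as
`i = (i_1, i_2)` with `i_1` the first `l` entries, and assume the removal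
procedure of `i_1` on `{0, …, n+1}` leaves exactly `{p_0, …, p_{k+1}}`.  Then
for every `x ∈ X_n`:
`(∂_0)^l hatSz_i x = hatSz_{i_2} x(p_1 - 1, …, p_{k+1} - 1)` in `(X ×_τ G)_k`. -/
theorem szczarba_hatSz_d0_pow (X : SSet) (G : CategoryTheory.SimplicialObject GrpCat)
    (τ : TwistingFn X G) (k l : ℕ) (i : List ℕ) (hi : memS (k + l) (k + l) i)
    (p : ℕ → ℕ) (hp0 : p 0 = 0) (hpk : p (k + 1) = k + l + 1)
    (hmono : ∀ s < k + 1, p s < p (s + 1))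
    (hrest : restList (k + l + 1) (i.take l) = (List.range (k + 2)).map p)
    (x : X _⦋k + l⦌) :
    twD0pow τ l k (hatSz τ (k + l) i x)
      = hatSz τ k (i.drop l) (simpOp X (fun t => p (t + 1) - 1) (k + l) k x) := by
  exact mainAux X G τ k l i hi p hp0 hpk hmono hrest x
end

section
/- Let k be a commutative ring, G a group, and F a left G-set. Then for every p ≥ 0, the diagonal Δ maps the submodule 𝔞^p·k[F] of k[F] into the sum, over q + r = p, of the images of (𝔞^q·k[F]) ⊗ (𝔞^r·k[F]) in k[F] ⊗_k k[F]; that is, Δ(𝔞^p k[F]) ⊆ Σ_{q+r=p} (𝔞^q k[F]) ⊗ (𝔞^r k[F]). -/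
/-- The augmentation `ε : k[G] → k`, sending every group element to `1`. -/
noncomputable def augmentation (k G : Type*) [CommRing k] [Group G] :
    MonoidAlgebra k G →ₐ[k] k :=
  MonoidAlgebra.lift k k G 1

/-- The augmentation ideal `𝔞 = ker ε ⊲ k[G]`. -/
noncomputable def augIdeal (k G : Type*) [CommRing k] [Group G] :
    Ideal (MonoidAlgebra k G) :=
  RingHom.ker (augmentation k G).toRingHom

/-- The `k`-submodule `𝔞^p · k[F]` of `k[F]`: the `k`-submodule generated by the
products `a • m` with `a ∈ 𝔞^p` and `m ∈ k[F]`, where `k[G]` acts on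
`k[F] = F →₀ k` via the permutation representation of the `G`-action on `F`. -/
noncomputable def augPowSubmodule (k G F : Type*) [CommRing k] [Group G]
    [MulAction G F] (p : ℕ) : Submodule k (F →₀ k) :=
  Submodule.span k
    {z | ∃ a ∈ (augIdeal k G) ^ p, ∃ m : F →₀ k,
      z = ((Representation.ofMulAction k G F).asAlgebraHom a (MonoidAlgebra.ofCoeff m)).coeff}

/-- The diagonal `Δ : k[F] → k[F] ⊗_k k[F]`, `f ↦ f ⊗ f` on basis elements. -/
noncomputable def diagonal (k F : Type*) [CommRing k] :
    (F →₀ k) →ₗ[k] TensorProduct k (F →₀ k) (F →₀ k) :=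
  Finsupp.lift (TensorProduct k (F →₀ k) (F →₀ k)) k F
    (fun f => Finsupp.single f 1 ⊗ₜ[k] Finsupp.single f 1)

/-- The image of `(𝔞^q k[F]) ⊗ (𝔞^r k[F])` in `k[F] ⊗_k k[F]`. -/
noncomputable def tensorPart (k G F : Type*) [CommRing k] [Group G]
    [MulAction G F] (q r : ℕ) : Submodule k (TensorProduct k (F →₀ k) (F →₀ k)) :=
  Submodule.span k
    {z | ∃ m ∈ augPowSubmodule k G F q, ∃ n ∈ augPowSubmodule k G F r, z = m ⊗ₜ[k] n}

section Aux

variable (k G F : Type*) [CommRing k] [Group G] [MulAction G F]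

/-- The action of `k[G]` on `F →₀ k`. -/
noncomputable def actF : MonoidAlgebra k G →ₐ[k] Module.End k (F →₀ k) :=
  ((MonoidAlgebra.coeffLinearEquiv k : MonoidAlgebra k F ≃ₗ[k] (F →₀ k)).conjAlgEquiv k).toAlgHom.comp
    (Representation.ofMulAction k G F).asAlgebraHom

/-- The action of `g ∈ G` on `F →₀ k`. -/
noncomputable def rhoF (g : G) : Module.End k (F →₀ k) := actF k G F (MonoidAlgebra.of k G g)

local notation "ρ" => rhoF k G F
local notation "𝔞" => augIdeal k G
local notation "Δ" => diagonal k F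

/-- The target filtration piece. -/
noncomputable def Tsum (p : ℕ) : Submodule k (TensorProduct k (F →₀ k) (F →₀ k)) :=
  ∑ q ∈ Finset.range (p + 1), tensorPart k G F q (p - q)

variable {k G F}

lemma sum_submodule_le {ι M : Type*} [AddCommMonoid M] [Module k M]
    (s : Finset ι) (f : ι → Submodule k M) (U : Submodule k M)
    (h : ∀ i ∈ s, f i ≤ U) : (∑ i ∈ s, f i) ≤ U := by
  classical
  induction s using Finset.induction_on with
  | empty => simp
  | insert _ _ hx ih =>
    rw [Finset.sum_insert hx]
    rw [Submodule.add_eq_sup, sup_le_iff]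
    exact ⟨h _ (Finset.mem_insert_self _ _),
      ih fun i hi => h i (Finset.mem_insert_of_mem hi)⟩

lemma le_sum_submodule {ι M : Type*} [AddCommMonoid M] [Module k M]
    (s : Finset ι) (f : ι → Submodule k M) {i : ι} (hi : i ∈ s) :
    f i ≤ ∑ j ∈ s, f j := by
  classical
  induction s using Finset.induction_on with
  | empty => simp at hi
  | insert _ _ hx ih =>
    rw [Finset.sum_insert hx, Submodule.add_eq_sup]
    rcases Finset.mem_insert.mp hi with rfl | hi
    · exact le_sup_left
    · exact (ih hi).trans le_sup_right

lemma tensorPart_le_Tsum {q r p : ℕ} (h : q + r = p) :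
    tensorPart k G F q r ≤ Tsum k G F p := by
  have hq : q ∈ Finset.range (p + 1) := Finset.mem_range.mpr (by omega)
  have hr : r = p - q := by omega
  subst hr
  exact le_sum_submodule (Finset.range (p + 1)) (fun j => tensorPart k G F j (p - j)) hq

lemma aug_mul_pow (q : ℕ) : 𝔞 * 𝔞 ^ q ≤ 𝔞 ^ (q + 1) := by
  induction q with
  | zero =>
    rw [Submodule.pow_zero, Submodule.pow_one]
    refine Submodule.mul_le.mpr fun x hx y _ => ?_
    have : (augmentation k G).toRingHom (x * y) = 0 := by
      rw [map_mul, RingHom.mem_ker.mp hx, zero_mul]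
    exact RingHom.mem_ker.mpr this
  | succ n ih =>
    calc 𝔞 * 𝔞 ^ (n + 1) = (𝔞 * 𝔞 ^ n) * 𝔞 := by
          rw [Submodule.pow_succ, ← mul_assoc]
      _ ≤ 𝔞 ^ (n + 1) * 𝔞 := mul_le_mul_left ih _
      _ = 𝔞 ^ (n + 2) := (Submodule.pow_succ ..).symm

lemma mem_augPow_gen {p : ℕ} {a : MonoidAlgebra k G} (ha : a ∈ 𝔞 ^ p) (m : F →₀ k) :
    actF k G F a m ∈ augPowSubmodule k G F p :=
  Submodule.subset_span ⟨a, ha, m, rfl⟩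

lemma act_mem_augPow {q q' : ℕ} (b : MonoidAlgebra k G)
    (hb : ∀ a ∈ 𝔞 ^ q, b * a ∈ 𝔞 ^ q') {x : F →₀ k} (hx : x ∈ augPowSubmodule k G F q) :
    actF k G F b x ∈ augPowSubmodule k G F q' := by
  have hle : augPowSubmodule k G F q ≤
      (augPowSubmodule k G F q').comap (actF k G F b) := by
    rw [augPowSubmodule, Submodule.span_le]
    rintro z ⟨a, ha, m, rfl⟩
    simp only [SetLike.mem_coe, Submodule.mem_comap]
    have : actF k G F b
        (actF k G F a m)
        = actF k G F (b * a) m := by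
      rw [map_mul]; rfl
    change actF k G F b (actF k G F a m) ∈ _
    rw [this]
    exact mem_augPow_gen (hb a ha) m
  exact hle hx

lemma of_mem_aug (g : G) : MonoidAlgebra.of k G g - 1 ∈ 𝔞 := by
  refine RingHom.mem_ker.mpr ?_
  rw [map_sub, map_one]
  have : (augmentation k G).toRingHom (MonoidAlgebra.of k G g) = 1 := by
    simp [augmentation]
  rw [this, sub_self]

lemma g_act_mem_augPow {q : ℕ} (g : G) {x : F →₀ k} (hx : x ∈ augPowSubmodule k G F q) :
    ρ g x ∈ augPowSubmodule k G F q := by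
  have := act_mem_augPow (MonoidAlgebra.of k G g)
    (fun a ha => Ideal.mul_mem_left _ _ ha) hx
  exact this

lemma gsub_act_mem_augPow {q : ℕ} (g : G) {x : F →₀ k} (hx : x ∈ augPowSubmodule k G F q) :
    ρ g x - x ∈ augPowSubmodule k G F (q + 1) := by
  have := act_mem_augPow (MonoidAlgebra.of k G g - 1)
    (fun a ha => aug_mul_pow q (Ideal.mul_mem_mul (of_mem_aug g) ha)) hx
  rwa [map_sub, map_one, LinearMap.sub_apply, Module.End.one_apply] at this

lemma diagonal_single (f : F) (c : k) :
    Δ (Finsupp.single f c) = c • (Finsupp.single f 1 ⊗ₜ[k] Finsupp.single f 1) := by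
  simp [diagonal]

lemma actF_of (g : G) : actF k G F (MonoidAlgebra.of k G g) = ρ g := rfl

lemma rhoF_single (g : G) (f : F) (c : k) :
    ρ g (Finsupp.single f c) = Finsupp.single (g • f) c := by
  change ((Representation.ofMulAction k G F).asAlgebraHom (MonoidAlgebra.of k G g)
    (MonoidAlgebra.single f c)).coeff = _
  rw [Representation.asAlgebraHom_of, Representation.ofMulAction_single]; rfl

lemma diag_equivariant (g : G) (n : F →₀ k) :
    Δ (ρ g n) = TensorProduct.map (ρ g) (ρ g) (Δ n) := by
  induction n using Finsupp.induction_linear with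
  | zero => simp
  | add a b ha hb => simp [map_add, ha, hb]
  | single f c =>
    simp [rhoF_single, diagonal_single, TensorProduct.smul_tmul']

lemma sum_submodule_induction {ι M : Type*} [AddCommMonoid M] [Module k M]
    {s : Finset ι} {f : ι → Submodule k M} {x : M} (hx : x ∈ ∑ i ∈ s, f i)
    (P : M → Prop) (h0 : P 0) (hadd : ∀ a b, P a → P b → P (a + b))
    (hmem : ∀ i ∈ s, ∀ y ∈ f i, P y) : P x := by
  classical
  induction s using Finset.induction_on generalizing x with
  | empty =>
    rw [Finset.sum_empty] at hx
    obtain rfl : x = 0 := (Submodule.mem_bot k).mp hx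
    exact h0
  | insert a s ha ih =>
    rw [Finset.sum_insert ha, Submodule.add_eq_sup] at hx
    obtain ⟨y, hy, z, hz, rfl⟩ := Submodule.mem_sup.mp hx
    exact hadd y z (hmem a (Finset.mem_insert_self _ _) y hy)
      (ih hz (fun i hi => hmem i (Finset.mem_insert_of_mem hi)))

lemma map_g_tensorPart (g : G) {q r : ℕ} {t : TensorProduct k (F →₀ k) (F →₀ k)}
    (ht : t ∈ tensorPart k G F q r) :
    TensorProduct.map (ρ g) (ρ g) t ∈ tensorPart k G F q r := by
  induction ht using Submodule.span_induction with
  | mem z hz =>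
    obtain ⟨m, hm, n, hn, rfl⟩ := hz
    rw [TensorProduct.map_tmul]
    exact Submodule.subset_span ⟨_, g_act_mem_augPow g hm, _, g_act_mem_augPow g hn, rfl⟩
  | zero => simp
  | add x y hx hy ihx ihy => rw [map_add]; exact Submodule.add_mem _ ihx ihy
  | smul c x hx ihx => rw [map_smul]; exact Submodule.smul_mem _ c ihx

lemma Dg_tensorPart (g : G) {q r : ℕ} {t : TensorProduct k (F →₀ k) (F →₀ k)}
    (ht : t ∈ tensorPart k G F q r) :
    TensorProduct.map (ρ g) (ρ g) t - t ∈
      tensorPart k G F (q + 1) r ⊔ tensorPart k G F q (r + 1) := by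
  induction ht using Submodule.span_induction with
  | mem z hz =>
    obtain ⟨m, hm, n, hn, rfl⟩ := hz
    rw [TensorProduct.map_tmul]
    have key : ρ g m ⊗ₜ[k] ρ g n - m ⊗ₜ[k] n
        = (ρ g m - m) ⊗ₜ[k] (ρ g n) + m ⊗ₜ[k] (ρ g n - n) := by
      rw [TensorProduct.sub_tmul, TensorProduct.tmul_sub, sub_add_sub_cancel]
    rw [key]
    exact Submodule.add_mem _
      (Submodule.mem_sup_left (Submodule.subset_span
        ⟨_, gsub_act_mem_augPow g hm, _, g_act_mem_augPow g hn, rfl⟩))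
      (Submodule.mem_sup_right (Submodule.subset_span
        ⟨_, hm, _, gsub_act_mem_augPow g hn, rfl⟩))
  | zero => simp
  | add x y hx hy ihx ihy =>
    have : TensorProduct.map (ρ g) (ρ g) (x + y) - (x + y)
        = (TensorProduct.map (ρ g) (ρ g) x - x) + (TensorProduct.map (ρ g) (ρ g) y - y) := by
      rw [map_add]; module
    rw [this]
    exact Submodule.add_mem _ ihx ihy
  | smul c x hx ihx =>
    have : TensorProduct.map (ρ g) (ρ g) (c • x) - c • x
        = c • (TensorProduct.map (ρ g) (ρ g) x - x) := by
      rw [map_smul, smul_sub]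
    rw [this]
    exact Submodule.smul_mem _ c ihx

lemma Dg_Tsum (g : G) {p : ℕ} {t : TensorProduct k (F →₀ k) (F →₀ k)}
    (ht : t ∈ Tsum k G F p) :
    TensorProduct.map (ρ g) (ρ g) t - t ∈ Tsum k G F (p + 1) := by
  refine sum_submodule_induction ht
    (fun t => TensorProduct.map (ρ g) (ρ g) t - t ∈ Tsum k G F (p + 1)) (by simp) ?_ ?_
  · intro a b iha ihb
    have : TensorProduct.map (ρ g) (ρ g) (a + b) - (a + b)
        = (TensorProduct.map (ρ g) (ρ g) a - a) + (TensorProduct.map (ρ g) (ρ g) b - b) := by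
      rw [map_add]; module
    rw [this]
    exact Submodule.add_mem _ iha ihb
  · intro i hi y hy
    have hip : i ≤ p := Nat.lt_succ_iff.mp (Finset.mem_range.mp hi)
    exact (sup_le (tensorPart_le_Tsum (by omega)) (tensorPart_le_Tsum (by omega)) :
      tensorPart k G F (i + 1) (p - i) ⊔ tensorPart k G F i (p - i + 1) ≤ Tsum k G F (p + 1))
      (Dg_tensorPart g hy)

lemma map_g_Tsum (g : G) {p : ℕ} {t : TensorProduct k (F →₀ k) (F →₀ k)}
    (ht : t ∈ Tsum k G F p) :
    TensorProduct.map (ρ g) (ρ g) t ∈ Tsum k G F p := by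
  refine sum_submodule_induction ht
    (fun t => TensorProduct.map (ρ g) (ρ g) t ∈ Tsum k G F p) (by simp) ?_ ?_
  · intro a b iha ihb
    rw [map_add]
    exact Submodule.add_mem _ iha ihb
  · intro i hi y hy
    have hip : i ≤ p := Nat.lt_succ_iff.mp (Finset.mem_range.mp hi)
    exact tensorPart_le_Tsum (by omega) (map_g_tensorPart g hy)

lemma mem_augPow_zero (m : F →₀ k) : m ∈ augPowSubmodule k G F 0 := by
  have h1 : (1 : MonoidAlgebra k G) ∈ 𝔞 ^ 0 := by
    rw [Submodule.pow_zero, Ideal.one_eq_top]; trivial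
  have := mem_augPow_gen h1 m
  rwa [map_one, Module.End.one_apply] at this

lemma diag_mem_tensorPart_zero (n : F →₀ k) : Δ n ∈ tensorPart k G F 0 0 := by
  induction n using Finsupp.induction_linear with
  | zero => simp
  | add a b ha hb => rw [map_add]; exact Submodule.add_mem _ ha hb
  | single f c =>
    rw [diagonal_single]
    exact Submodule.smul_mem _ c (Submodule.subset_span
      ⟨_, mem_augPow_zero _, _, mem_augPow_zero _, rfl⟩)

lemma diag_mem_Tsum_zero (n : F →₀ k) : Δ n ∈ Tsum k G F 0 := by
  have h : Tsum k G F 0 = tensorPart k G F 0 0 := by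
    simp [Tsum]
  rw [h]
  exact diag_mem_tensorPart_zero n

lemma diag_act_Tsum {q : ℕ} (b : MonoidAlgebra k G) {n : F →₀ k}
    (hn : Δ n ∈ Tsum k G F q) :
    Δ (actF k G F b n) ∈ Tsum k G F q := by
  induction b using MonoidAlgebra.induction_on with
  | of g =>
    rw [actF_of, diag_equivariant]
    exact map_g_Tsum g hn
  | add a b iha ihb =>
    rw [map_add, LinearMap.add_apply, map_add]
    exact Submodule.add_mem _ iha ihb
  | smul r a iha =>
    rw [map_smul, LinearMap.smul_apply, map_smul]
    exact Submodule.smul_mem _ r iha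

lemma diag_aug_act_Tsum {q : ℕ} {y : MonoidAlgebra k G} (hy : y ∈ 𝔞) {n : F →₀ k}
    (hn : Δ n ∈ Tsum k G F q) :
    Δ (actF k G F y n) ∈ Tsum k G F (q + 1) := by
  have claim : ∀ z : MonoidAlgebra k G,
      Δ (actF k G F
        (z - (augmentation k G z) • 1) n) ∈ Tsum k G F (q + 1) := by
    intro z
    induction z using MonoidAlgebra.induction_on with
    | of g =>
      have hg : (augmentation k G) (MonoidAlgebra.of k G g) = 1 := by
        simp [augmentation]
      rw [hg, one_smul, map_sub, map_one, LinearMap.sub_apply, Module.End.one_apply,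
        actF_of, map_sub, diag_equivariant]
      exact Dg_Tsum g hn
    | add a b iha ihb =>
      have hr : a + b - (augmentation k G) (a + b) • (1 : MonoidAlgebra k G)
          = (a - (augmentation k G) a • 1) + (b - (augmentation k G) b • 1) := by
        rw [map_add, add_smul]; module
      rw [hr, map_add, LinearMap.add_apply, map_add]
      exact Submodule.add_mem _ iha ihb
    | smul r a iha =>
      have hr : r • a - (augmentation k G) (r • a) • (1 : MonoidAlgebra k G)
          = r • (a - (augmentation k G) a • 1) := by
        rw [map_smul, smul_eq_mul, mul_smul]; module
      rw [hr, map_smul, LinearMap.smul_apply, map_smul]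
      exact Submodule.smul_mem _ r iha
  have hy0 : (augmentation k G) y = 0 := RingHom.mem_ker.mp hy
  have := claim y
  rwa [hy0, zero_smul, sub_zero] at this

lemma diag_augPow_act_Tsum (p : ℕ) {a : MonoidAlgebra k G} (ha : a ∈ 𝔞 ^ p)
    {n : F →₀ k} {q : ℕ} (hn : Δ n ∈ Tsum k G F q) :
    Δ (actF k G F a n) ∈ Tsum k G F (p + q) := by
  induction p generalizing a n q with
  | zero =>
    rw [zero_add]
    exact diag_act_Tsum a hn
  | succ p ih =>
    rw [Submodule.pow_succ] at ha
    have key : ∀ b ∈ (𝔞 ^ p) * 𝔞, ∀ (n : F →₀ k) (q : ℕ), Δ n ∈ Tsum k G F q →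
        Δ (actF k G F b n) ∈ Tsum k G F (p + 1 + q) := by
      intro b hb
      refine Submodule.mul_induction_on hb ?_ ?_
      · intro x hx y hy n q hn
        have hxy : actF k G F (x * y) n
            = actF k G F x
              (actF k G F y n) := by
          rw [map_mul]; rfl
        rw [hxy]
        have h1 := diag_aug_act_Tsum hy hn
        have h2 := ih hx h1
        have hq : p + (q + 1) = p + 1 + q := by omega
        rwa [hq] at h2
      · intro x y ihx ihy n q hn
        rw [map_add, LinearMap.add_apply, map_add]
        exact Submodule.add_mem _ (ihx n q hn) (ihy n q hn)
    exact key a ha n q hn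

end Aux

/-- Let `k` be a commutative ring, `G` a group and `F` a left
`G`-set.  For every `p ≥ 0` the diagonal `Δ` maps `𝔞^p · k[F]` into
`Σ_{q+r=p} (𝔞^q k[F]) ⊗ (𝔞^r k[F]) ⊆ k[F] ⊗_k k[F]`. -/
theorem diagonal_augPow_filtration (k G F : Type*) [CommRing k] [Group G]
    [MulAction G F] (p : ℕ) :
    ∀ x ∈ augPowSubmodule k G F p,
      diagonal k F x ∈ ∑ q ∈ Finset.range (p + 1), tensorPart k G F q (p - q) := by
  intro x hx
  show diagonal k F x ∈ Tsum k G F p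
  induction hx using Submodule.span_induction with
  | mem z hz =>
    obtain ⟨a, ha, m, rfl⟩ := hz
    have h0 := diag_mem_Tsum_zero (k := k) (G := G) (F := F) m
    have := diag_augPow_act_Tsum p ha h0
    rwa [Nat.add_zero] at this
  | zero => simp
  | add a b ha hb iha ihb => rw [map_add]; exact Submodule.add_mem _ iha ihb
  | smul c a ha iha => rw [map_smul]; exact Submodule.smul_mem _ c iha
end
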